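/- Let G be a connected multigraph and let (T,γ) be a rooted carving decomposition of G of width at most w. Then for every node u of T and every connected component H of the subgraph of G induced on V[u], there exists a contractive rooted carving decomposition of H of height at most w·height(u), where height(u) denotes the height of the subtree T[u]. -/

import Mathlib

/-- A multigraph: a map assigning to each edge an unordered pair of two
distinct vertices (loops forbidden, parallel edges allowed). -/
structure Multigraph (V E : Type) where
  ends : E → Sym2 V
  no_loops : ∀ e : E, ¬ (ends e).IsDiag

namespace Multigraph

variable {V E : Type}

/-- Two vertices are adjacent if some edge has them as its endpoints. -/
def Adj (G : Multigraph V E) (a b : V) : Prop :=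
  a ≠ b ∧ ∃ e : E, a ∈ G.ends e ∧ b ∈ G.ends e

/-- A multigraph is connected if every two vertices are joined by a finite
sequence of adjacencies. -/
def Connected (G : Multigraph V E) : Prop :=
  Nonempty V ∧ ∀ a b : V, Relation.ReflTransGen G.Adj a b

/-- The number of edges with one endpoint in `S` and the other outside `S`. -/
noncomputable def cutCount (G : Multigraph V E) (S : Set V) : ℕ :=
  Nat.card {e : E // (∃ a ∈ G.ends e, a ∈ S) ∧ (∃ a ∈ G.ends e, a ∉ S)}

/-- The degree of a vertex: the number of edge-endpoint incidences at `v`. -/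
noncomputable def degree (G : Multigraph V E) (v : V) : ℕ :=
  Nat.card {e : E // v ∈ G.ends e}

end Multigraph

/-- Rooted binary trees in which every internal node has exactly two children,
with leaves labeled by elements of `α`. -/
inductive BTree (α : Type) : Type
  | leaf (a : α) : BTree α
  | node (l r : BTree α) : BTree α

namespace BTree

variable {α : Type}

/-- The list of leaf labels of a binary tree. -/
def leaves : BTree α → List α
  | leaf a => [a]
  | node l r => l.leaves ++ r.leaves

/-- The set of leaf labels of a binary tree (for a node `u` of a carving
decomposition, this is `V[u]`). -/
def leafSet (T : BTree α) : Set α := {a | a ∈ T.leaves}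

/-- The height of a binary tree: maximum number of edges on a root-to-leaf path. -/
def height : BTree α → ℕ
  | leaf _ => 0
  | node l r => max l.height r.height + 1

/-- The list of all subtrees (i.e. nodes) of a binary tree. -/
def subtrees : BTree α → List (BTree α)
  | leaf a => [leaf a]
  | node l r => node l r :: (l.subtrees ++ r.subtrees)

end BTree

/-- A rooted carving decomposition of a multigraph `G` on vertex type `V`:
a rooted binary tree whose leaves are labeled bijectively with the vertices. -/
def IsCarvingDecomp {V E : Type} (_G : Multigraph V E) (T : BTree V) : Prop :=
  T.leaves.Nodup ∧ ∀ v : V, v ∈ T.leaves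

/-- The carving decomposition `T` of `G` has width at most `w`:
for every node `u`, `|E(V[u], V∖V[u])| ≤ w`. -/
def CarvWidthLE {V E : Type} (G : Multigraph V E) (T : BTree V) (w : ℕ) : Prop :=
  ∀ u ∈ T.subtrees, G.cutCount u.leafSet ≤ w

/-- A carving decomposition is contractive if for every internal node `u`
there is an edge with one endpoint in `V[u.l]` and the other in `V[u.r]`. -/
def Contractive {V E : Type} (G : Multigraph V E) (T : BTree V) : Prop :=
  ∀ l r : BTree V, BTree.node l r ∈ T.subtrees →
    ∃ e : E, (∃ a ∈ G.ends e, a ∈ l.leafSet) ∧ (∃ a ∈ G.ends e, a ∈ r.leafSet)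

/-- Adjacency within the subgraph of `G` induced on `S`. -/
def Multigraph.AdjIn {V E : Type} (G : Multigraph V E) (S : Set V) (a b : V) : Prop :=
  a ∈ S ∧ b ∈ S ∧ G.Adj a b

/-- `C` is (the vertex set of) a connected component of the subgraph of `G` induced on `S`. -/
def IsComponentOf {V E : Type} (G : Multigraph V E) (S C : Set V) : Prop :=
  ∃ v ∈ S, C = {x | x ∈ S ∧ Relation.ReflTransGen (G.AdjIn S) v x}

/-- A rooted carving decomposition of the subgraph of `G` induced on `C`:
a rooted binary tree whose leaves are labeled bijectively with the vertices of `C`. -/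
def IsCarvingDecompOn {V : Type} (C : Set V) (T : BTree V) : Prop :=
  T.leaves.Nodup ∧ ∀ v : V, v ∈ T.leaves ↔ v ∈ C

/-- The carving decomposition `T` of the subgraph of `G` induced on `C` is contractive:
for every internal node there is an edge of the induced subgraph (both endpoints in
`C`) with one endpoint in `V[u.l]` and the other in `V[u.r]`. -/
def ContractiveOn {V E : Type} (G : Multigraph V E) (C : Set V) (T : BTree V) : Prop :=
  ∀ l r : BTree V, BTree.node l r ∈ T.subtrees →
    ∃ e : E, (∀ a ∈ G.ends e, a ∈ C) ∧
      (∃ a ∈ G.ends e, a ∈ l.leafSet) ∧ (∃ a ∈ G.ends e, a ∈ r.leafSet)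

section Aux

open Relation

variable {V E : Type}

/-- The connected component of `v` in the subgraph induced on `S`. -/
def compOf (G : Multigraph V E) (S : Set V) (v : V) : Set V :=
  {x | x ∈ S ∧ Relation.ReflTransGen (G.AdjIn S) v x}

lemma Multigraph.Adj.symm' {G : Multigraph V E} {a b : V} (h : G.Adj a b) : G.Adj b a :=
  ⟨h.1.symm, h.2.imp fun _ he => ⟨he.2, he.1⟩⟩

lemma adjIn_symm {G : Multigraph V E} {S : Set V} {a b : V} (h : G.AdjIn S a b) :
    G.AdjIn S b a := ⟨h.2.1, h.1, h.2.2.symm'⟩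

lemma compOf_self {G : Multigraph V E} {S : Set V} {v : V} (hv : v ∈ S) :
    v ∈ compOf G S v := ⟨hv, ReflTransGen.refl⟩

lemma compOf_subset {G : Multigraph V E} {S : Set V} {v : V} :
    compOf G S v ⊆ S := fun _ h => h.1

lemma compOf_eq_of_mem {G : Multigraph V E} {S : Set V} {v x : V}
    (hx : x ∈ compOf G S v) : compOf G S x = compOf G S v := by
  obtain ⟨hxS, hvx⟩ := hx
  have hsymm : Symmetric (ReflTransGen (G.AdjIn S)) :=
    fun a b h => by
      induction h with
      | refl => exact ReflTransGen.refl
      | tail _ hbc ih => exact ReflTransGen.head (adjIn_symm hbc) ih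
  ext y
  constructor
  · rintro ⟨hyS, h⟩; exact ⟨hyS, hvx.trans h⟩
  · rintro ⟨hyS, h⟩; exact ⟨hyS, (hsymm hvx).trans h⟩

lemma compOf_mono {G : Multigraph V E} {S S' : Set V} (hSS : S' ⊆ S) {v : V} :
    compOf G S' v ⊆ compOf G S v := by
  rintro x ⟨hxS', h⟩
  exact ⟨hSS hxS', by
    induction h with
    | refl => exact ReflTransGen.refl
    | tail _ hab ih => exact (ih hab.1).tail ⟨hSS hab.1, hSS hab.2.1, hab.2.2⟩⟩

lemma exists_boundary {α : Type*} (R : α → α → Prop) (D : Set α) :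
    ∀ {v y : α}, Relation.ReflTransGen R v y → v ∈ D → y ∉ D →
    ∃ a b, a ∈ D ∧ b ∉ D ∧ R a b ∧ Relation.ReflTransGen R v a := by
  intro v y h
  induction h with
  | refl => intro hv hy; exact absurd hv hy
  | tail h1 h2 ih =>
    intro hv hy
    rename_i c d
    by_cases hc : c ∈ D
    · exact ⟨c, d, hc, hy, h2, h1⟩
    · exact ih hv hc

namespace BTree

lemma leafSet_node {l r : BTree V} : (node l r).leafSet = l.leafSet ∪ r.leafSet := by
  ext x; simp [leafSet, leaves]

lemma self_mem_subtrees (T : BTree V) : T ∈ T.subtrees := by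
  cases T <;> simp [subtrees]

lemma subtrees_trans : ∀ (T u s : BTree V), u ∈ T.subtrees → s ∈ u.subtrees →
    s ∈ T.subtrees := by
  intro T
  induction T with
  | leaf a =>
    intro u s hu hs
    simp [subtrees] at hu
    subst hu
    exact hs
  | node l r ihl ihr =>
    intro u s hu hs
    simp only [subtrees, List.mem_cons, List.mem_append] at hu ⊢
    rcases hu with rfl | hu | hu
    · simpa [subtrees] using hs
    · exact Or.inr (Or.inl (by
        have := ihl u s hu hs; exact this))
    · exact Or.inr (Or.inr (ihr u s hu hs))

lemma leaves_sublist : ∀ (T u : BTree V), u ∈ T.subtrees → u.leaves.Sublist T.leaves := by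
  intro T
  induction T with
  | leaf a =>
    intro u hu
    simp [subtrees] at hu; subst hu; exact List.Sublist.refl _
  | node l r ihl ihr =>
    intro u hu
    simp only [subtrees, List.mem_cons, List.mem_append] at hu
    rcases hu with rfl | hu | hu
    · exact List.Sublist.refl _
    · exact (ihl u hu).trans (List.sublist_append_left _ _)
    · exact (ihr u hu).trans (List.sublist_append_right _ _)

end BTree

end Aux

theorem carve_key {V E : Type} [Fintype V] [Fintype E] (G : Multigraph V E) (w : ℕ) :
    ∀ u : BTree V, u.leaves.Nodup →
    (∀ s ∈ u.subtrees, G.cutCount s.leafSet ≤ w) →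
    ∀ C : Set V, IsComponentOf G u.leafSet C →
    ∃ T' : BTree V, IsCarvingDecompOn C T' ∧ ContractiveOn G C T' ∧
      T'.height ≤ w * u.height := by
  classical
  intro u
  induction u with
  | leaf a =>
    intro _ _ C hC
    obtain ⟨v, hv, hCdef⟩ := hC
    have hva : v = a := by simpa [BTree.leafSet, BTree.leaves] using hv
    have hCa : C = {a} := by
      subst hCdef hva
      ext x
      simp only [Set.mem_setOf_eq, Set.mem_singleton_iff]
      constructor
      · rintro ⟨hx, -⟩; simpa [BTree.leafSet, BTree.leaves] using hx
      · rintro rfl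
        exact ⟨by simp [BTree.leafSet, BTree.leaves], Relation.ReflTransGen.refl⟩
    refine ⟨BTree.leaf a, ⟨by simp [BTree.leaves], ?_⟩, ?_, by simp [BTree.height]⟩
    · intro x; simp [BTree.leaves, hCa]
    · intro l r h
      simp [BTree.subtrees] at h
  | node l r ihl ihr =>
    intro hnd hw C hC
    obtain ⟨v, hvS, hCdef⟩ := hC
    have hnd' : l.leaves.Nodup ∧ r.leaves.Nodup ∧ l.leaves.Disjoint r.leaves := by
      rw [show (BTree.node l r).leaves = l.leaves ++ r.leaves from rfl,
        List.nodup_append] at hnd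
      exact ⟨hnd.1, hnd.2.1, fun x hx hy => hnd.2.2 x hx x hy rfl⟩
    obtain ⟨hndl, hndr, hdisj⟩ := hnd'
    have hABdisj : ∀ x, x ∈ l.leafSet → x ∈ r.leafSet → False := fun x hx hy => hdisj hx hy
    have hSmem : ∀ x, x ∈ (BTree.node l r).leafSet ↔ x ∈ l.leafSet ∨ x ∈ r.leafSet := by
      intro x; simp [BTree.leafSet, BTree.leaves]
    have hwl : ∀ s ∈ l.subtrees, G.cutCount s.leafSet ≤ w := fun s hs =>
      hw s (by simp [BTree.subtrees]; right; left; exact hs)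
    have hwr : ∀ s ∈ r.subtrees, G.cutCount s.leafSet ≤ w := fun s hs =>
      hw s (by simp [BTree.subtrees]; right; right; exact hs)
    set H := w * max l.height r.height with hHdef
    have hCeq : C = compOf G (BTree.node l r).leafSet v := hCdef
    have hCsub : C ⊆ (BTree.node l r).leafSet := by rw [hCeq]; exact compOf_subset
    have hvC : v ∈ C := by rw [hCeq]; exact compOf_self hvS
    set P : V → Set V := fun x =>
      if x ∈ l.leafSet then compOf G l.leafSet x else compOf G r.leafSet x with hPdef
    have hPA : ∀ x, x ∈ l.leafSet → P x = compOf G l.leafSet x := by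
      intro x hx; simp only [hPdef, if_pos hx]
    have hPB : ∀ x, x ∉ l.leafSet → P x = compOf G r.leafSet x := by
      intro x hx; simp only [hPdef, if_neg hx]
    have hPmem : ∀ b, b ∈ (BTree.node l r).leafSet → b ∈ P b := by
      intro b hb
      by_cases hbA : b ∈ l.leafSet
      · rw [hPA b hbA]; exact compOf_self hbA
      · rw [hPB b hbA]; exact compOf_self (((hSmem b).1 hb).resolve_left hbA)
    have hPclosed : ∀ b x, x ∈ P b → P x = P b := by
      intro b x hx
      by_cases hbA : b ∈ l.leafSet
      · rw [hPA b hbA] at hx ⊢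
        have hxA : x ∈ l.leafSet := compOf_subset hx
        rw [hPA x hxA]
        exact compOf_eq_of_mem hx
      · rw [hPB b hbA] at hx ⊢
        have hxB : x ∈ r.leafSet := compOf_subset hx
        have hxA : x ∉ l.leafSet := fun h => hABdisj x h hxB
        rw [hPB x hxA]
        exact compOf_eq_of_mem hx
    have hPsubC : ∀ b, b ∈ C → P b ⊆ C := by
      intro b hbC
      have hbS : b ∈ (BTree.node l r).leafSet := hCsub hbC
      have hbc' : b ∈ compOf G (BTree.node l r).leafSet v := by rw [← hCeq]; exact hbC
      have h2 : compOf G (BTree.node l r).leafSet b = C := by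
        rw [hCeq]; exact compOf_eq_of_mem hbc'
      by_cases hbA : b ∈ l.leafSet
      · rw [hPA b hbA, ← h2]
        exact compOf_mono fun x hx => (hSmem x).2 (Or.inl hx)
      · rw [hPB b hbA, ← h2]
        exact compOf_mono fun x hx => (hSmem x).2 (Or.inr hx)
    have hPdecomp : ∀ b, b ∈ C → ∃ Tb : BTree V,
        IsCarvingDecompOn (P b) Tb ∧ ContractiveOn G (P b) Tb ∧ Tb.height ≤ H := by
      intro b hbC
      have hbS : b ∈ (BTree.node l r).leafSet := hCsub hbC
      by_cases hbA : b ∈ l.leafSet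
      · have hcomp : IsComponentOf G l.leafSet (P b) := ⟨b, hbA, hPA b hbA⟩
        obtain ⟨Tb, h1, h2, h3⟩ := ihl hndl hwl _ hcomp
        exact ⟨Tb, h1, h2, h3.trans (Nat.mul_le_mul_left w (le_max_left _ _))⟩
      · have hbB : b ∈ r.leafSet := ((hSmem b).1 hbS).resolve_left hbA
        have hcomp : IsComponentOf G r.leafSet (P b) := ⟨b, hbB, hPB b hbA⟩
        obtain ⟨Tb, h1, h2, h3⟩ := ihr hndr hwr _ hcomp
        exact ⟨Tb, h1, h2, h3.trans (Nat.mul_le_mul_left w (le_max_right _ _))⟩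
    set F : Set V → Set E := fun D => {e | (∀ c ∈ G.ends e, c ∈ C) ∧
      (∃ c ∈ G.ends e, c ∈ l.leafSet) ∧ (∃ c ∈ G.ends e, c ∈ r.leafSet) ∧
      ¬(∀ c ∈ G.ends e, c ∈ D)} with hFdef
    have hFw : ∀ D : Set V, (F D).ncard ≤ w := by
      intro D
      have hsub : F D ⊆ {e : E | (∃ a ∈ G.ends e, a ∈ l.leafSet) ∧
          (∃ a ∈ G.ends e, a ∉ l.leafSet)} := by
        rintro e ⟨-, hA, ⟨c, hc, hcB⟩, -⟩
        exact ⟨hA, c, hc, fun h => hABdisj c h hcB⟩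
      have h1 := Set.ncard_le_ncard hsub (Set.toFinite _)
      have h2 : ({e : E | (∃ a ∈ G.ends e, a ∈ l.leafSet) ∧
          (∃ a ∈ G.ends e, a ∉ l.leafSet)}).ncard = G.cutCount l.leafSet := by
        rw [Multigraph.cutCount, ← Nat.card_coe_set_eq]
        rfl
      have h3 : G.cutCount l.leafSet ≤ w :=
        hw l (by simp [BTree.subtrees]; right; left; exact l.self_mem_subtrees)
      omega
    -- the one-step merging construction
    have hfind : ∀ (D : Set V) (TD : BTree V), v ∈ D → D ⊆ C → (∀ x ∈ D, P x ⊆ D) →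
        IsCarvingDecompOn D TD → ContractiveOn G C TD → D ≠ C →
        ∃ (e : E) (D' : Set V) (TD' : BTree V), IsCarvingDecompOn D' TD' ∧
          ContractiveOn G C TD' ∧ TD'.height ≤ max TD.height H + 1 ∧ v ∈ D' ∧ D' ⊆ C ∧
          (∀ x ∈ D', P x ⊆ D') ∧ e ∈ F D ∧ F D' ⊆ F D \ {e} := by
      intro D TD hvD hDC hDcl hDdec hDcon hne
      have hy : ∃ y, y ∈ C ∧ y ∉ D := by
        by_contra h
        push_neg at h
        exact hne (Set.Subset.antisymm hDC fun y hy => h y hy)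
      obtain ⟨y, hyC, hyD⟩ := hy
      have hvy : Relation.ReflTransGen (G.AdjIn (BTree.node l r).leafSet) v y := by
        have := hyC; rw [hCeq] at this; exact this.2
      obtain ⟨a, b, haD, hbD, hab, hva⟩ := exists_boundary _ D hvy hvD hyD
      have haC : a ∈ C := hDC haD
      have hbC : b ∈ C := by
        rw [hCeq]; exact ⟨hab.2.1, hva.tail hab⟩
      obtain ⟨haS, hbS, hneq, e, hae, hbe⟩ := hab
      have hadj : G.Adj a b := ⟨hneq, e, hae, hbe⟩
      have hends : G.ends e = s(a, b) := (Sym2.mem_and_mem_iff hneq).1 ⟨hae, hbe⟩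
      have hmem : ∀ c ∈ G.ends e, c = a ∨ c = b := by
        intro c hc; rw [hends] at hc; exact Sym2.mem_iff.1 hc
      have hcross : (a ∈ l.leafSet ∧ b ∈ r.leafSet) ∨ (a ∈ r.leafSet ∧ b ∈ l.leafSet) := by
        rcases (hSmem a).1 haS with haA | haB <;> rcases (hSmem b).1 hbS with hbA | hbB
        · exfalso
          have hbPa : b ∈ P a := by
            rw [hPA a haA]
            exact ⟨hbA, Relation.ReflTransGen.single ⟨haA, hbA, hadj⟩⟩
          exact hbD (hDcl a haD hbPa)
        · exact Or.inl ⟨haA, hbB⟩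
        · exact Or.inr ⟨haB, hbA⟩
        · exfalso
          have haA : a ∉ l.leafSet := fun h => hABdisj a h haB
          have hbPa : b ∈ P a := by
            rw [hPB a haA]
            exact ⟨hbB, Relation.ReflTransGen.single ⟨haB, hbB, hadj⟩⟩
          exact hbD (hDcl a haD hbPa)
      obtain ⟨Tb, hTbdec, hTbcon, hTbh⟩ := hPdecomp b hbC
      have hbPb : b ∈ P b := hPmem b hbS
      have hPbC : P b ⊆ C := hPsubC b hbC
      have hDPb : ∀ z, z ∈ D → z ∈ P b → False := by
        intro z hzD hzPb
        have hbz : b ∈ P z := by rw [hPclosed b z hzPb]; exact hbPb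
        exact hbD (hDcl z hzD hbz)
      refine ⟨e, D ∪ P b, BTree.node TD Tb, ⟨?_, ?_⟩, ?_, ?_, Or.inl hvD, ?_, ?_, ?_, ?_⟩
      · show (TD.leaves ++ Tb.leaves).Nodup
        rw [List.nodup_append]
        exact ⟨hDdec.1, hTbdec.1,
          fun x hx y hy hxy => hDPb x ((hDdec.2 x).1 hx) ((hTbdec.2 x).1 (by rw [hxy]; exact hy))⟩
      · intro x
        show x ∈ TD.leaves ++ Tb.leaves ↔ _
        rw [List.mem_append, hDdec.2, hTbdec.2]
        exact Iff.rfl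
      · intro l' r' h
        simp only [BTree.subtrees, List.mem_cons, List.mem_append] at h
        rcases h with heq | h | h
        · injection heq with h1 h2
          subst h1; subst h2
          refine ⟨e, ?_, ⟨a, hae, (hDdec.2 a).2 haD⟩, ⟨b, hbe, (hTbdec.2 b).2 hbPb⟩⟩
          intro c hc
          rcases hmem c hc with rfl | rfl
          · exact haC
          · exact hbC
        · exact hDcon l' r' h
        · obtain ⟨e', he1, he2, he3⟩ := hTbcon l' r' h
          exact ⟨e', fun c hc => hPbC (he1 c hc), he2, he3⟩
      · show max TD.height Tb.height + 1 ≤ max TD.height H + 1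
        exact Nat.succ_le_succ (max_le (le_max_left _ _) (hTbh.trans (le_max_right _ _)))
      · rintro x (hx | hx)
        · exact hDC hx
        · exact hPbC hx
      · rintro x (hx | hx)
        · exact (hDcl x hx).trans Set.subset_union_left
        · rw [hPclosed b x hx]; exact Set.subset_union_right
      · show (∀ c ∈ G.ends e, c ∈ C) ∧ (∃ c ∈ G.ends e, c ∈ l.leafSet) ∧
          (∃ c ∈ G.ends e, c ∈ r.leafSet) ∧ ¬(∀ c ∈ G.ends e, c ∈ D)
        refine ⟨?_, ?_, ?_, fun h => hbD (h b hbe)⟩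
        · intro c hc
          rcases hmem c hc with rfl | rfl
          · exact haC
          · exact hbC
        · rcases hcross with ⟨h1, _⟩ | ⟨_, h2⟩
          · exact ⟨a, hae, h1⟩
          · exact ⟨b, hbe, h2⟩
        · rcases hcross with ⟨_, h2⟩ | ⟨h1, _⟩
          · exact ⟨b, hbe, h2⟩
          · exact ⟨a, hae, h1⟩
      · intro f hf
        obtain ⟨h1, h2, h3, h4⟩ := hf
        refine ⟨⟨h1, h2, h3, fun hh => h4 fun c hc => Or.inl (hh c hc)⟩, ?_⟩
        intro hfe
        rw [Set.mem_singleton_iff] at hfe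
        subst hfe
        apply h4
        intro c hc
        rcases hmem c hc with rfl | rfl
        · exact Or.inl haD
        · exact Or.inr hbPb
    -- the merging induction
    have hinner : ∀ n : ℕ, ∀ (D : Set V) (TD : BTree V), v ∈ D → D ⊆ C →
        (∀ x ∈ D, P x ⊆ D) → IsCarvingDecompOn D TD → ContractiveOn G C TD →
        (F D).ncard ≤ n →
        ∃ T' : BTree V, IsCarvingDecompOn C T' ∧ ContractiveOn G C T' ∧
          T'.height ≤ max TD.height H + n := by
      intro n
      induction n with
      | zero =>
        intro D TD hvD hDC hDcl hDdec hDcon hcard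
        by_cases hDeq : D = C
        · subst hDeq
          exact ⟨TD, hDdec, hDcon, (le_max_left _ _).trans (Nat.le_add_right _ _)⟩
        · exfalso
          obtain ⟨e, D', TD', _, _, _, _, _, _, heF, _⟩ :=
            hfind D TD hvD hDC hDcl hDdec hDcon hDeq
          have : 0 < (F D).ncard := (Set.ncard_pos (Set.toFinite _)).2 ⟨e, heF⟩
          omega
      | succ n ih =>
        intro D TD hvD hDC hDcl hDdec hDcon hcard
        by_cases hDeq : D = C
        · subst hDeq
          exact ⟨TD, hDdec, hDcon, (le_max_left _ _).trans (Nat.le_add_right _ _)⟩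
        · obtain ⟨e, D', TD', hdec', hcon', hh', hv', hsub', hcl', heF, hFsub⟩ :=
            hfind D TD hvD hDC hDcl hDdec hDcon hDeq
          have hcard' : (F D').ncard ≤ n := by
            have h1 := Set.ncard_le_ncard hFsub (Set.toFinite _)
            have h2 : (F D \ {e}).ncard = (F D).ncard - 1 :=
              Set.ncard_diff_singleton_of_mem heF
            have h3 : 0 < (F D).ncard := (Set.ncard_pos (Set.toFinite _)).2 ⟨e, heF⟩
            omega
          obtain ⟨T', h1, h2, h3⟩ := ih D' TD' hv' hsub' hcl' hdec' hcon' hcard'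
          refine ⟨T', h1, h2, ?_⟩
          have hmax : max TD'.height H ≤ max TD.height H + 1 :=
            max_le hh' ((le_max_right TD.height H).trans (Nat.le_succ _))
          omega
    obtain ⟨T0, hT0dec, hT0con0, hT0h⟩ := hPdecomp v hvC
    have hT0con : ContractiveOn G C T0 := by
      intro l' r' h
      obtain ⟨e', he1, he2, he3⟩ := hT0con0 l' r' h
      exact ⟨e', fun c hc => hPsubC v hvC (he1 c hc), he2, he3⟩
    obtain ⟨T', h1, h2, h3⟩ := hinner ((F (P v)).ncard) (P v) T0 (hPmem v hvS)
      (hPsubC v hvC) (fun x hx => by rw [hPclosed v x hx]) hT0dec hT0con le_rfl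
    refine ⟨T', h1, h2, ?_⟩
    have hb1 : max T0.height H = H := max_eq_right hT0h
    have hb2 : (F (P v)).ncard ≤ w := hFw _
    have hfin : w * (BTree.node l r).height = H + w := by
      show w * (max l.height r.height + 1) = H + w
      rw [hHdef, Nat.mul_succ]
    omega

/-- Let `G` be a connected multigraph and `(T,γ)` a rooted carving
decomposition of `G` of width at most `w`. Then for every node `u` of `T` and every
connected component `H` of the subgraph of `G` induced on `V[u]`, there is a contractive
rooted carving decomposition of `H` of height at most `w · height(u)`. -/
theorem statement_14 {V E : Type} [Fintype V] [Fintype E]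
    (G : Multigraph V E) (hG : G.Connected)
    (T : BTree V) (hT : IsCarvingDecomp G T)
    (w : ℕ) (hw : CarvWidthLE G T w)
    (u : BTree V) (hu : u ∈ T.subtrees)
    (C : Set V) (hC : IsComponentOf G u.leafSet C) :
    ∃ T' : BTree V, IsCarvingDecompOn C T' ∧ ContractiveOn G C T' ∧
      T'.height ≤ w * u.height := by
  have hnd : u.leaves.Nodup := hT.1.sublist (BTree.leaves_sublist T u hu)
  exact carve_key G w u hnd (fun s hs => hw s (BTree.subtrees_trans T u s hu hs)) C hC
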